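/- Let d ≥ 1 be an integer and ν ∈ (0,1]. Let a be a real d×d matrix with tr a > 0 satisfying the Cordes condition |a|² ≤ (tr a)²/(d−1+ν), and set γ := tr a/|a|². Then for every real d×d matrix M one has |γ·(a:M) − tr M| ≤ √(1−ν)·|M|. -/

import Mathlib

/-- **Pointwise Cordes estimate.** Let `d ≥ 1`, `ν ∈ (0,1]`, and let `a` be a real `d × d`
matrix with positive trace satisfying the Cordes condition `|a|² ≤ (tr a)²/(d−1+ν)`, where
`|·|` is the Frobenius norm. With `γ := tr a / |a|²`, for every real `d × d` matrix `M` one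
has `|γ·(a:M) − tr M| ≤ √(1−ν)·|M|`, where `a:M` is the Frobenius inner product. -/
theorem cordes_pointwise_estimate (d : ℕ) (hd : 1 ≤ d) (ν : ℝ) (hν0 : 0 < ν) (hν1 : ν ≤ 1)
    (a : Matrix (Fin d) (Fin d) ℝ)
    (htr : 0 < Matrix.trace a)
    (hcordes : (∑ i, ∑ j, (a i j) ^ 2) ≤ (Matrix.trace a) ^ 2 / ((d : ℝ) - 1 + ν)) :
    ∀ M : Matrix (Fin d) (Fin d) ℝ,
      |(Matrix.trace a / (∑ i, ∑ j, (a i j) ^ 2)) * (∑ i, ∑ j, a i j * M i j)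
          - Matrix.trace M|
        ≤ Real.sqrt (1 - ν) * Real.sqrt (∑ i, ∑ j, (M i j) ^ 2) := by
  intro M
  set S : ℝ := ∑ i, ∑ j, (a i j) ^ 2 with hSdef
  have hSnn : 0 ≤ S := Finset.sum_nonneg fun i _ => Finset.sum_nonneg fun j _ => sq_nonneg _
  have hSpos : 0 < S := by
    rcases hSnn.lt_or_eq with h | h
    · exact h
    · exfalso
      have ha : ∀ i j, a i j = 0 := by
        intro i j
        have h1 := (Finset.sum_eq_zero_iff_of_nonneg
          (fun i _ => Finset.sum_nonneg fun j _ => sq_nonneg (a i j))).1 h.symm i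
          (Finset.mem_univ i)
        have h2 := (Finset.sum_eq_zero_iff_of_nonneg
          (fun j _ => sq_nonneg (a i j))).1 h1 j (Finset.mem_univ j)
        exact pow_eq_zero_iff (two_ne_zero) |>.1 h2
      have : Matrix.trace a = 0 := by
        simp [Matrix.trace, Matrix.diag, ha]
      linarith
  have hd' : (0 : ℝ) < (d : ℝ) - 1 + ν := by
    have : (1 : ℝ) ≤ (d : ℝ) := by exact_mod_cast hd
    linarith
  set T : ℝ := Matrix.trace a with hTdef
  have hkey : ((d : ℝ) - 1 + ν) * S ≤ T ^ 2 := by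
    have := (le_div_iff₀ hd').1 hcordes
    linarith
  set γ : ℝ := T / S with hγdef
  -- expand the difference as a Frobenius inner product
  have expand : γ * (∑ i, ∑ j, a i j * M i j) - Matrix.trace M
      = ∑ i, ∑ j, (γ * a i j - if i = j then 1 else 0) * M i j := by
    have h1 : ∀ i : Fin d, (∑ j, (if i = j then (1:ℝ) else 0) * M i j) = M i i := by
      intro i
      simp
    simp only [sub_mul, Finset.sum_sub_distrib, h1]
    rw [Matrix.trace]
    simp [Matrix.diag, Finset.mul_sum, mul_assoc]
  rw [expand]
  -- Cauchy–Schwarz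
  have hB : (0 : ℝ) ≤ ∑ i, ∑ j, (γ * a i j - if i = j then 1 else 0) ^ 2 :=
    Finset.sum_nonneg fun i _ => Finset.sum_nonneg fun j _ => sq_nonneg _
  have hMnn : (0 : ℝ) ≤ ∑ i, ∑ j, (M i j) ^ 2 :=
    Finset.sum_nonneg fun i _ => Finset.sum_nonneg fun j _ => sq_nonneg _
  have hCS : (∑ i, ∑ j, (γ * a i j - if i = j then 1 else 0) * M i j) ^ 2
      ≤ (∑ i, ∑ j, (γ * a i j - if i = j then 1 else 0) ^ 2) * (∑ i, ∑ j, (M i j) ^ 2) := by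
    have := Finset.sum_mul_sq_le_sq_mul_sq (Finset.univ : Finset (Fin d × Fin d))
      (fun p => γ * a p.1 p.2 - if p.1 = p.2 then 1 else 0) (fun p => M p.1 p.2)
    simpa [Fintype.sum_prod_type] using this
  -- bound the squared norm of γ a − I
  have hBval : (∑ i, ∑ j, (γ * a i j - if i = j then 1 else 0) ^ 2) ≤ 1 - ν := by
    have hexp : (∑ i, ∑ j, (γ * a i j - if i = j then 1 else 0) ^ 2)
        = γ ^ 2 * S - 2 * γ * T + d := by
      have h1 : ∀ i j : Fin d, (γ * a i j - if i = j then 1 else 0) ^ 2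
          = γ ^ 2 * (a i j) ^ 2 - 2 * γ * ((if i = j then (1:ℝ) else 0) * a i j)
            + (if i = j then (1:ℝ) else 0) := by
        intro i j
        by_cases h : i = j <;> simp [h] <;> ring
      simp only [h1, Finset.sum_add_distrib, Finset.sum_sub_distrib, ← Finset.mul_sum]
      have h2 : ∀ i : Fin d, (∑ j, (if i = j then (1:ℝ) else 0) * a i j) = a i i := by
        intro i; simp
      have h3 : (∑ i : Fin d, ∑ j : Fin d, (if i = j then (1:ℝ) else 0)) = d := by
        simp
      rw [hTdef, Matrix.trace]
      simp only [h2, h3, Matrix.diag]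
      rw [hSdef]
    rw [hexp]
    have hγS : γ ^ 2 * S = T ^ 2 / S := by
      field_simp [hγdef]
      rw [hγdef]; field_simp [hSpos.ne']
    have hγT : γ * T = T ^ 2 / S := by
      field_simp [hγdef]
      rw [hγdef]; field_simp [hSpos.ne']
    rw [hγS]
    have h4 : (d : ℝ) - 1 + ν ≤ T ^ 2 / S := (le_div_iff₀ hSpos).2 (by linarith)
    have : T ^ 2 / S - 2 * (γ * T) + d = d - T ^ 2 / S := by rw [hγT]; ring
    nlinarith [h4]
  -- conclude
  have habs : |∑ i, ∑ j, (γ * a i j - if i = j then 1 else 0) * M i j|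
      ≤ Real.sqrt ((∑ i, ∑ j, (γ * a i j - if i = j then 1 else 0) ^ 2)
          * (∑ i, ∑ j, (M i j) ^ 2)) := by
    rw [← Real.sqrt_sq_eq_abs]
    exact Real.sqrt_le_sqrt hCS
  calc |∑ i, ∑ j, (γ * a i j - if i = j then 1 else 0) * M i j|
      ≤ Real.sqrt ((∑ i, ∑ j, (γ * a i j - if i = j then 1 else 0) ^ 2)
          * (∑ i, ∑ j, (M i j) ^ 2)) := habs
    _ = Real.sqrt (∑ i, ∑ j, (γ * a i j - if i = j then 1 else 0) ^ 2)
          * Real.sqrt (∑ i, ∑ j, (M i j) ^ 2) := Real.sqrt_mul hB _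
    _ ≤ Real.sqrt (1 - ν) * Real.sqrt (∑ i, ∑ j, (M i j) ^ 2) := by
        exact mul_le_mul_of_nonneg_right (Real.sqrt_le_sqrt hBval) (Real.sqrt_nonneg _)
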